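/- Let P₁,…,P_k be homogeneous holomorphic polynomials on ℂⁿ all of the same degree, and set Q(z) := ∑_{l=1}^k P_l(z)·conj(P_l(z)). Assume Q is holomorphically nondegenerate. Then: (i) there is no nonzero λ = (λ₁,…,λₙ) ∈ ℝⁿ such that ∑_{j=1}^n λ_j ( z_j·∂Q/∂z_j(z) + z̄_j·∂Q/∂z̄_j(z) ) = 0 for all z ∈ ℂⁿ (no real diagonal rotation); and (ii) there is no nonzero nilpotent n×n complex matrix N such that ∑_{j=1}^n ( (Nz)_j·∂Q/∂z_j(z) + conj((Nz)_j·∂Q/∂z_j(z)) ) = 0 for all z ∈ ℂⁿ (no nilpotent rotation). -/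

import Mathlib

open MvPolynomial

noncomputable section

lemma real_zero {σ : Type*} (G : MvPolynomial σ ℂ)
    (h : ∀ x : σ → ℝ, eval (fun s => (x s : ℂ)) G = 0) : G = 0 := by
  classical
  set G₁ : MvPolynomial σ ℝ := ∑ m ∈ G.support, monomial m ((G.coeff m).re) with hG₁
  set G₂ : MvPolynomial σ ℝ := ∑ m ∈ G.support, monomial m ((G.coeff m).im) with hG₂
  have hc₁ : ∀ m, coeff m G₁ = (G.coeff m).re := by
    intro m
    rw [hG₁, MvPolynomial.coeff_sum]
    by_cases hm : m ∈ G.support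
    · rw [Finset.sum_eq_single m (fun b _ hb => by rw [coeff_monomial, if_neg hb])
        (fun h => absurd hm h)]
      rw [coeff_monomial, if_pos rfl]
    · rw [Finset.sum_eq_zero]
      · simp [MvPolynomial.notMem_support_iff.mp hm]
      · intro b hb
        rw [coeff_monomial, if_neg]
        rintro rfl; exact hm hb
  have hc₂ : ∀ m, coeff m G₂ = (G.coeff m).im := by
    intro m
    rw [hG₂, MvPolynomial.coeff_sum]
    by_cases hm : m ∈ G.support
    · rw [Finset.sum_eq_single m (fun b _ hb => by rw [coeff_monomial, if_neg hb])
        (fun h => absurd hm h)]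
      rw [coeff_monomial, if_pos rfl]
    · rw [Finset.sum_eq_zero]
      · simp [MvPolynomial.notMem_support_iff.mp hm]
      · intro b hb
        rw [coeff_monomial, if_neg]
        rintro rfl; exact hm hb
  have hG : G = map (algebraMap ℝ ℂ) G₁ + C Complex.I * map (algebraMap ℝ ℂ) G₂ := by
    ext m
    rw [coeff_add, coeff_map, coeff_C_mul, coeff_map, hc₁, hc₂]
    simp [Complex.coe_algebraMap]
    rw [mul_comm]
    exact (Complex.re_add_im _).symm
  have hmapeval : ∀ (G' : MvPolynomial σ ℝ) (x : σ → ℝ),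
      eval (fun s => (x s : ℂ)) (map (algebraMap ℝ ℂ) G') = ((eval x G' : ℝ) : ℂ) := by
    intro G' x
    rw [eval_map]
    have := MvPolynomial.eval₂_comp_left (algebraMap ℝ ℂ) (RingHom.id ℝ) x G'
    simp only [eval₂_id] at this
    simpa [RingHom.comp_id, Function.comp_def] using this.symm
  have h12 : ∀ x : σ → ℝ, eval x G₁ = 0 ∧ eval x G₂ = 0 := by
    intro x
    have h0 := h x
    rw [hG] at h0
    rw [map_add, map_mul, eval_C, hmapeval, hmapeval] at h0
    have hre := congrArg Complex.re h0
    have him := congrArg Complex.im h0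
    simp at hre him
    exact ⟨hre, him⟩
  have hG₁0 : G₁ = 0 := MvPolynomial.funext (fun x => by rw [(h12 x).1]; simp)
  have hG₂0 : G₂ = 0 := MvPolynomial.funext (fun x => by rw [(h12 x).2]; simp)
  rw [hG, hG₁0, hG₂0]
  simp


lemma conj_eval {n : ℕ} (z : Fin n → ℂ) (p : MvPolynomial (Fin n) ℂ) :
    (starRingEnd ℂ) (eval z p)
      = eval₂ (starRingEnd ℂ) (fun j => (starRingEnd ℂ) (z j)) p := by
  have := MvPolynomial.eval₂_comp_left (starRingEnd ℂ) (RingHom.id ℂ) z p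
  simp only [eval₂_id] at this
  simpa [RingHom.comp_id, Function.comp_def] using this

lemma polarize {n : ℕ} {ι : Type*} [Fintype ι] (u v : ι → MvPolynomial (Fin n) ℂ)
    (h : ∀ z : Fin n → ℂ, ∑ i, eval z (u i) * (starRingEnd ℂ) (eval z (v i)) = 0) :
    ∀ z w : Fin n → ℂ, ∑ i, eval z (u i) * (starRingEnd ℂ) (eval w (v i)) = 0 := by
  classical
  set ψ : MvPolynomial (Fin n) ℂ → MvPolynomial (Fin n ⊕ Fin n) ℂ :=
    eval₂ C (fun j => X (Sum.inl j) + C Complex.I * X (Sum.inr j)) with hψ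
  set ψ' : MvPolynomial (Fin n) ℂ → MvPolynomial (Fin n ⊕ Fin n) ℂ :=
    eval₂ C (fun j => X (Sum.inl j) - C Complex.I * X (Sum.inr j)) with hψ'
  set G : MvPolynomial (Fin n ⊕ Fin n) ℂ :=
    ∑ i, ψ (u i) * ψ' (map (starRingEnd ℂ) (v i)) with hGdef
  have evalψ : ∀ (a b : Fin n → ℂ) (p : MvPolynomial (Fin n) ℂ),
      eval (Sum.elim a b) (ψ p) = eval (fun j => a j + Complex.I * b j) p := by
    intro a b p
    rw [hψ, ← MvPolynomial.eval_assoc]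
    have hfun : (⇑(eval (Sum.elim a b)) ∘ fun j => X (Sum.inl j) + C Complex.I * X (Sum.inr j))
        = fun j => a j + Complex.I * b j := by funext j; simp
    rw [hfun]
  have evalψ' : ∀ (a b : Fin n → ℂ) (p : MvPolynomial (Fin n) ℂ),
      eval (Sum.elim a b) (ψ' p) = eval (fun j => a j - Complex.I * b j) p := by
    intro a b p
    rw [hψ', ← MvPolynomial.eval_assoc]
    have hfun : (⇑(eval (Sum.elim a b)) ∘ fun j => X (Sum.inl j) - C Complex.I * X (Sum.inr j))
        = fun j => a j - Complex.I * b j := by funext j; simp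
    rw [hfun]
  have hGreal : ∀ x : (Fin n ⊕ Fin n) → ℝ, eval (fun s => (x s : ℂ)) G = 0 := by
    intro x
    set a : Fin n → ℂ := fun j => (x (Sum.inl j) : ℂ) with ha
    set b : Fin n → ℂ := fun j => (x (Sum.inr j) : ℂ) with hb
    have hx : (fun s => (x s : ℂ)) = Sum.elim a b := by funext s; cases s <;> rfl
    set z : Fin n → ℂ := fun j => a j + Complex.I * b j with hz
    have hconj : (fun j => a j - Complex.I * b j) = fun j => (starRingEnd ℂ) (z j) := by
      funext j
      rw [hz]
      simp [ha, hb]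
      ring
    have hterm : ∀ i : ι, eval (Sum.elim a b) (ψ (u i) * ψ' (map (starRingEnd ℂ) (v i)))
        = eval z (u i) * (starRingEnd ℂ) (eval z (v i)) := by
      intro i
      rw [map_mul, evalψ, evalψ']
      congr 1
      rw [eval_map, conj_eval, hconj]
    rw [hGdef, hx, map_sum]
    rw [Finset.sum_congr rfl (fun i _ => hterm i)]
    exact h z
  have hG0 : G = 0 := real_zero G hGreal
  intro z w
  set a : Fin n → ℂ := fun j => (z j + (starRingEnd ℂ) (w j)) / 2 with ha
  set b : Fin n → ℂ := fun j => (z j - (starRingEnd ℂ) (w j)) / (2 * Complex.I) with hb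
  have haz : (fun j => a j + Complex.I * b j) = z := by
    funext j
    rw [ha, hb]
    field_simp
    ring
  have hbw : (fun j => a j - Complex.I * b j) = fun j => (starRingEnd ℂ) (w j) := by
    funext j
    rw [ha, hb]
    field_simp
    ring
  have h2 : eval (Sum.elim a b) G = 0 := by rw [hG0]; simp
  rw [hGdef, map_sum] at h2
  have hterm : ∀ i : ι, eval (Sum.elim a b) (ψ (u i) * ψ' (map (starRingEnd ℂ) (v i)))
      = eval z (u i) * (starRingEnd ℂ) (eval w (v i)) := by
    intro i
    rw [map_mul, evalψ, evalψ', haz, hbw]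
    congr 1
    rw [eval_map, conj_eval]
  rw [Finset.sum_congr rfl (fun i _ => hterm i)] at h2
  exact h2


def Alin {n : ℕ} (N : Matrix (Fin n) (Fin n) ℂ) :
    Module.End ℂ (MvPolynomial (Fin n) ℂ) :=
  ∑ j, (LinearMap.mulLeft ℂ (∑ i, C (N j i) * X i)).comp
    (MvPolynomial.pderiv j).toLinearMap

lemma Alin_apply {n : ℕ} (N : Matrix (Fin n) (Fin n) ℂ) (p : MvPolynomial (Fin n) ℂ) :
    Alin N p = ∑ j, (∑ i, C (N j i) * X i) * pderiv j p := by
  simp [Alin, LinearMap.sum_apply, LinearMap.mulLeft_apply]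

lemma eval_Alin {n : ℕ} (N : Matrix (Fin n) (Fin n) ℂ) (z : Fin n → ℂ)
    (p : MvPolynomial (Fin n) ℂ) :
    eval z (Alin N p) = ∑ j, (∑ i, N j i * z i) * eval z (pderiv j p) := by
  rw [Alin_apply, map_sum]
  refine Finset.sum_congr rfl fun j _ => ?_
  rw [map_mul, map_sum]
  congr 1
  refine Finset.sum_congr rfl fun i _ => ?_
  rw [map_mul, eval_C, eval_X]

lemma Alin_mul {n : ℕ} (N : Matrix (Fin n) (Fin n) ℂ) (p q : MvPolynomial (Fin n) ℂ) :
    Alin N (p * q) = Alin N p * q + p * Alin N q := by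
  simp only [Alin_apply, pderiv_mul, mul_add]
  rw [Finset.sum_add_distrib, Finset.sum_mul, Finset.mul_sum]
  congr 1
  · exact Finset.sum_congr rfl fun j _ => by ring
  · exact Finset.sum_congr rfl fun j _ => by ring

lemma Alin_X {n : ℕ} (N : Matrix (Fin n) (Fin n) ℂ) (i : Fin n) :
    Alin N (X i) = ∑ i', C (N i i') * X i' := by
  rw [Alin_apply]
  rw [Finset.sum_eq_single i]
  · simp
  · intro j _ hj
    rw [pderiv_X_of_ne (Ne.symm hj)]
    simp
  · simp

lemma Alin_pow_X {n : ℕ} (N : Matrix (Fin n) (Fin n) ℂ) (r : ℕ) (i : Fin n) :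
    (Alin N ^ r) (X i) = ∑ i', C ((N ^ r) i i') * X i' := by
  induction r generalizing i with
  | zero =>
    simp only [pow_zero, Module.End.one_apply, Matrix.one_apply]
    rw [Finset.sum_congr rfl (fun i' _ => by rw [apply_ite C, ite_mul, C_1, one_mul, C_0, zero_mul])]
    rw [Finset.sum_ite_eq Finset.univ i (fun i' => X i')]
    simp
  | succ r ih =>
    rw [pow_succ, Module.End.mul_apply, Alin_X, map_sum]
    have : ∀ i', (Alin N ^ r) (C (N i i') * X i') = C (N i i') * ∑ i'', C ((N ^ r) i' i'') * X i'' := by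
      intro i'
      rw [← smul_eq_C_mul, map_smul, ih, smul_eq_C_mul]
    rw [Finset.sum_congr rfl fun i' _ => this i']
    rw [Finset.sum_congr rfl fun i' (_ : i' ∈ Finset.univ) => Finset.mul_sum _ _ (C (N i i'))]
    rw [Finset.sum_comm]
    refine Finset.sum_congr rfl fun i'' _ => ?_
    rw [pow_succ', Matrix.mul_apply]
    rw [map_sum, Finset.sum_mul]
    refine Finset.sum_congr rfl fun i' _ => ?_
    rw [map_mul, ← mul_assoc]

end
noncomputable section
lemma Alin_nilp_mul {n : ℕ} (N : Matrix (Fin n) (Fin n) ℂ) :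
    ∀ (c a b : ℕ) (p q : MvPolynomial (Fin n) ℂ), a + b = c →
      (Alin N ^ a) p = 0 → (Alin N ^ b) q = 0 → (Alin N ^ c) (p * q) = 0 := by
  intro c
  induction c with
  | zero =>
    intro a b p q hab hp hq
    have ha : a = 0 := by omega
    subst ha
    simp only [pow_zero, Module.End.one_apply] at hp
    subst hp
    simp
  | succ c ih =>
    intro a b p q hab hp hq
    match a, b with
    | 0, b =>
      simp only [pow_zero, Module.End.one_apply] at hp
      subst hp
      simp
    | a + 1, 0 =>
      simp only [pow_zero, Module.End.one_apply] at hq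
      subst hq
      simp
    | a + 1, b + 1 =>
      have hc : (Alin N ^ (c + 1)) (p * q) = (Alin N ^ c) (Alin N (p * q)) := by
        rw [pow_succ, Module.End.mul_apply]
      rw [hc, Alin_mul, map_add]
      have h1 : (Alin N ^ c) (Alin N p * q) = 0 := by
        refine ih a (b + 1) (Alin N p) q (by omega) ?_ hq
        rw [← Module.End.mul_apply, ← pow_succ]
        exact hp
      have h2 : (Alin N ^ c) (p * Alin N q) = 0 := by
        refine ih (a + 1) b p (Alin N q) (by omega) hp ?_
        rw [← Module.End.mul_apply, ← pow_succ]
        exact hq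
      rw [h1, h2, add_zero]

lemma Alin_exists_nilp {n s : ℕ} (N : Matrix (Fin n) (Fin n) ℂ) (hN : N ^ s = 0)
    (p : MvPolynomial (Fin n) ℂ) : ∃ r, (Alin N ^ r) p = 0 := by
  have hX : ∀ i, (Alin N ^ s) (X i) = 0 := by
    intro i
    rw [Alin_pow_X, hN]
    simp
  induction p using MvPolynomial.induction_on with
  | C a =>
    refine ⟨1, ?_⟩
    rw [pow_one, Alin_apply]
    simp [pderiv_C]
  | add p q hp hq =>
    obtain ⟨rp, hp⟩ := hp
    obtain ⟨rq, hq⟩ := hq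
    refine ⟨rp + rq, ?_⟩
    rw [map_add]
    have h1 : (Alin N ^ (rp + rq)) p = 0 := by
      rw [add_comm, pow_add, Module.End.mul_apply, hp, map_zero]
    have h2 : (Alin N ^ (rp + rq)) q = 0 := by
      rw [pow_add, Module.End.mul_apply, hq, map_zero]
    rw [h1, h2, add_zero]
  | mul_X p i hp =>
    obtain ⟨rp, hp⟩ := hp
    exact ⟨rp + s, Alin_nilp_mul N (rp + s) rp s p (X i) rfl hp (hX i)⟩

lemma Alin_uniform {n s k : ℕ} (N : Matrix (Fin n) (Fin n) ℂ) (hN : N ^ s = 0)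
    (P : Fin k → MvPolynomial (Fin n) ℂ) : ∃ R, ∀ l, (Alin N ^ R) (P l) = 0 := by
  choose r hr using fun l => Alin_exists_nilp N hN (P l)
  refine ⟨∑ l, r l, fun l => ?_⟩
  have hle : r l ≤ ∑ l', r l' := Finset.single_le_sum (fun _ _ => Nat.zero_le _) (Finset.mem_univ l)
  obtain ⟨d, hd⟩ := Nat.le.dest hle
  rw [← hd, add_comm, pow_add, Module.End.mul_apply, hr l, map_zero]

lemma opZ {n : ℕ} {ι : Type*} [Fintype ι] (T : Module.End ℂ (MvPolynomial (Fin n) ℂ))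
    (u v : ι → MvPolynomial (Fin n) ℂ)
    (h : ∀ z w : Fin n → ℂ, ∑ i, eval z (u i) * (starRingEnd ℂ) (eval w (v i)) = 0) :
    ∀ z w : Fin n → ℂ, ∑ i, eval z (T (u i)) * (starRingEnd ℂ) (eval w (v i)) = 0 := by
  intro z w
  have hp : (∑ i, (starRingEnd ℂ) (eval w (v i)) • u i) = 0 := by
    apply MvPolynomial.funext
    intro z'
    rw [map_sum]
    rw [Finset.sum_congr rfl fun i (_ : i ∈ Finset.univ) => MvPolynomial.smul_eval z' (u i) _]
    rw [Finset.sum_congr rfl fun i (_ : i ∈ Finset.univ) => mul_comm _ (eval z' (u i))]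
    rw [h z' w]
    simp
  have h2 := congrArg (fun p => eval z (T p)) hp
  simp only [map_sum, map_smul, map_zero] at h2
  rw [Finset.sum_congr rfl fun i (_ : i ∈ Finset.univ) =>
    MvPolynomial.smul_eval z (T (u i)) ((starRingEnd ℂ) (eval w (v i)))] at h2
  rw [Finset.sum_congr rfl fun i (_ : i ∈ Finset.univ) =>
    mul_comm (eval z (T (u i))) ((starRingEnd ℂ) (eval w (v i)))]
  exact h2

lemma swapZ {n : ℕ} {ι : Type*} [Fintype ι]
    (u v : ι → MvPolynomial (Fin n) ℂ)
    (h : ∀ z w : Fin n → ℂ, ∑ i, eval z (u i) * (starRingEnd ℂ) (eval w (v i)) = 0) :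
    ∀ z w : Fin n → ℂ, ∑ i, eval z (v i) * (starRingEnd ℂ) (eval w (u i)) = 0 := by
  intro z w
  have h2 := congrArg (starRingEnd ℂ) (h w z)
  simp only [map_sum, map_mul, Complex.conj_conj, map_zero] at h2
  rw [Finset.sum_congr rfl fun i (_ : i ∈ Finset.univ) =>
    mul_comm ((starRingEnd ℂ) (eval w (u i))) (eval z (v i))] at h2
  exact h2

lemma main_nilpotent {n k : ℕ} (N : Matrix (Fin n) (Fin n) ℂ) (hNnil : IsNilpotent N)
    (P : Fin k → MvPolynomial (Fin n) ℂ)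
    (pol : ∀ z w : Fin n → ℂ, ∑ i : Fin k ⊕ Fin k,
      eval z (Sum.elim (fun l => Alin N (P l)) P i) *
        (starRingEnd ℂ) (eval w (Sum.elim P (fun l => Alin N (P l)) i)) = 0) :
    ∀ l, Alin N (P l) = 0 := by
  classical
  set A := Alin N with hA
  have powsucc : ∀ (a : ℕ) (p : MvPolynomial (Fin n) ℂ), A ((A ^ a) p) = (A ^ (a + 1)) p := by
    intro a p
    rw [pow_succ', Module.End.mul_apply]
  set U : ℕ → (Fin k ⊕ Fin k) → MvPolynomial (Fin n) ℂ :=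
    fun a => Sum.elim (fun l => (A ^ (a + 1)) (P l)) (fun l => (A ^ a) (P l)) with hU
  set V : ℕ → (Fin k ⊕ Fin k) → MvPolynomial (Fin n) ℂ :=
    fun b => Sum.elim (fun l => (A ^ b) (P l)) (fun l => (A ^ (b + 1)) (P l)) with hV
  have hAU : ∀ a, (fun i => A (U a i)) = U (a + 1) := by
    intro a; funext i
    rcases i with l | l <;> simp only [hU, Sum.elim_inl, Sum.elim_inr] <;> exact powsucc _ _
  have hAV : ∀ b, (fun i => A (V b i)) = V (b + 1) := by
    intro b; funext i
    rcases i with l | l <;> simp only [hV, Sum.elim_inl, Sum.elim_inr] <;> exact powsucc _ _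
  have hREL0 : ∀ b z w, ∑ i, eval z (U 0 i) * (starRingEnd ℂ) (eval w (V b i)) = 0 := by
    intro b
    induction b with
    | zero =>
      have hU0 : U 0 = Sum.elim (fun l => A (P l)) P := by
        funext i; rcases i with l | l <;> simp [hU, pow_one, pow_zero]
      have hV0 : V 0 = Sum.elim P (fun l => A (P l)) := by
        funext i; rcases i with l | l <;> simp [hV, pow_one, pow_zero]
      rw [hU0, hV0]
      exact pol
    | succ b ih =>
      have h1 := swapZ (U 0) (V b) ih
      have h2 := opZ A (V b) (U 0) h1
      have h3 := swapZ (fun i => A (V b i)) (U 0) h2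
      rw [← hAV b]
      exact h3
  have hREL : ∀ a b z w, ∑ i, eval z (U a i) * (starRingEnd ℂ) (eval w (V b i)) = 0 := by
    intro a
    induction a with
    | zero => exact hREL0
    | succ a ih =>
      intro b
      have h2 := opZ A (U a) (V b) (ih b)
      intro z w
      refine Eq.trans ?_ (h2 z w)
      exact Finset.sum_congr rfl fun i _ => by rw [← congrFun (hAU a) i]
  have hCHAIN : ∀ a b (z w : Fin n → ℂ),
      ∑ l, eval z ((A ^ a) (P l)) * (starRingEnd ℂ) (eval w ((A ^ b) (P l)))
        = (-1 : ℂ) ^ a * ∑ l, eval z (P l) * (starRingEnd ℂ) (eval w ((A ^ (a + b)) (P l))) := by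
    intro a
    induction a with
    | zero =>
      intro b z w
      simp only [pow_zero, Module.End.one_apply, one_mul, zero_add]
    | succ a ih =>
      intro b z w
      have hsplit := hREL a b z w
      rw [Fintype.sum_sum_type] at hsplit
      simp only [hU, hV, Sum.elim_inl, Sum.elim_inr] at hsplit
      have h1 : ∑ l, eval z ((A ^ (a + 1)) (P l)) * (starRingEnd ℂ) (eval w ((A ^ b) (P l)))
          = -∑ l, eval z ((A ^ a) (P l)) * (starRingEnd ℂ) (eval w ((A ^ (b + 1)) (P l))) := by
        exact eq_neg_of_add_eq_zero_left hsplit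
      rw [h1, ih (b + 1) z w]
      rw [show a + (b + 1) = (a + 1) + b by omega]
      ring
  obtain ⟨s, hNs⟩ := hNnil
  obtain ⟨R, hR⟩ := Alin_uniform N hNs P
  have down : ∀ r : ℕ, 1 ≤ r → (∀ l, (A ^ (r + 1)) (P l) = 0) → ∀ l, (A ^ r) (P l) = 0 := by
    intro r hr h1 l
    have h2r : ∀ l, (A ^ (r + r)) (P l) = 0 := by
      intro l'
      rw [show r + r = (r - 1) + (r + 1) by omega, pow_add, Module.End.mul_apply, h1 l', map_zero]
    have hz : ∀ z : Fin n → ℂ, eval z ((A ^ r) (P l)) = 0 := by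
      intro z
      have h0 : ∑ l', eval z ((A ^ r) (P l')) * (starRingEnd ℂ) (eval z ((A ^ r) (P l'))) = 0 := by
        rw [hCHAIN r r z z]
        rw [Finset.sum_congr rfl fun l' (_ : l' ∈ Finset.univ) => by rw [h2r l']]
        simp
      rw [Finset.sum_congr rfl fun l' (_ : l' ∈ Finset.univ) =>
        Complex.mul_conj (eval z ((A ^ r) (P l')))] at h0
      rw [← Complex.ofReal_sum] at h0
      norm_cast at h0
      have hns : Complex.normSq (eval z ((A ^ r) (P l))) = 0 := by
        have := (Finset.sum_eq_zero_iff_of_nonneg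
          (fun l' _ => Complex.normSq_nonneg (eval z ((A ^ r) (P l'))))).mp h0 l (Finset.mem_univ l)
        exact this
      exact Complex.normSq_eq_zero.mp hns
    exact MvPolynomial.funext fun z => by rw [hz z]; simp
  have dd : ∀ d r, 1 ≤ r → R ≤ r + d → ∀ l, (A ^ r) (P l) = 0 := by
    intro d
    induction d with
    | zero =>
      intro r hr hRr l
      obtain ⟨e, he⟩ := Nat.le.dest (by omega : R ≤ r)
      rw [← he, add_comm, pow_add, Module.End.mul_apply, hR l, map_zero]
    | succ d ih =>
      intro r hr hRr l
      by_cases hc : R ≤ r + d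
      · exact ih r hr hc l
      · exact down r hr (fun l' => ih (r + 1) (by omega) (by omega) l') l
  intro l
  have := dd R 1 le_rfl (by omega) l
  rwa [pow_one] at this

lemma coeff_X_mul_pderiv {n : ℕ} (j : Fin n) (α : Fin n →₀ ℕ) (p : MvPolynomial (Fin n) ℂ) :
    coeff α (X j * pderiv j p) = (α j : ℂ) * coeff α p := by
  induction p using MvPolynomial.induction_on' with
  | add p q hp hq =>
    rw [map_add, mul_add, coeff_add, hp, hq, coeff_add, mul_add]
  | monomial β b =>
    rw [pderiv_monomial]
    rw [show (X j : MvPolynomial (Fin n) ℂ) = monomial (Finsupp.single j 1) 1 from rfl]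
    rw [monomial_mul, one_mul]
    by_cases hβ : β j = 0
    · rw [hβ]
      simp only [Nat.cast_zero, mul_zero, map_zero, coeff_zero]
      symm
      rcases eq_or_ne β α with rfl | hne
      · rw [coeff_monomial, if_pos rfl, hβ]
        simp
      · rw [coeff_monomial, if_neg hne, mul_zero]
    · have hfix : Finsupp.single j 1 + (β - Finsupp.single j 1) = β := by
        ext a
        rw [Finsupp.add_apply, Finsupp.tsub_apply]
        by_cases hja : j = a
        · subst hja
          simp only [Finsupp.single_eq_same]
          omega
        · simp [Finsupp.single_apply, hja]
      rw [hfix, coeff_monomial, coeff_monomial]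
      rcases eq_or_ne β α with rfl | hne
      · rw [if_pos rfl, if_pos rfl]
        ring
      · rw [if_neg hne, if_neg hne, mul_zero]

lemma rearrange {k n : ℕ} (F : Fin n → ℂ) (D : Fin n → Fin k → ℂ) (Pv : Fin k → ℂ) :
    ∑ j, F j * (∑ l, D j l * Pv l) = ∑ l, (∑ j, F j * D j l) * Pv l := by
  simp only [Finset.mul_sum, Finset.sum_mul]
  rw [Finset.sum_comm]
  exact Finset.sum_congr rfl fun l _ => Finset.sum_congr rfl fun j _ => by ring

/-- for a holomorphically nondegenerate sum of squares model
`Q = ∑_l P_l · conj P_l` (with `P_l` homogeneous holomorphic polynomials of the same degree),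
there is no nonzero real diagonal rotation and no nonzero nilpotent rotation in `𝔤₀`. -/
theorem sum_of_squares_no_real_diagonal_no_nilpotent_rotation {n k m : ℕ}
    (P : Fin k → MvPolynomial (Fin n) ℂ)
    (hP : ∀ l, (P l).IsHomogeneous m)
    -- `Q` is holomorphically nondegenerate, where `∂Q/∂z_j (z) = ∑_l ∂P_l/∂z_j (z) · conj (P_l z)`
    (hnd : ∀ f : Fin n → MvPolynomial (Fin n) ℂ,
      (∀ z : Fin n → ℂ, ∑ j, eval z (f j) *
        (∑ l, eval z (pderiv j (P l)) * (starRingEnd ℂ) (eval z (P l))) = 0) → f = 0) :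
    -- (i) no nonzero real diagonal rotation
    (¬ ∃ lam : Fin n → ℝ, lam ≠ 0 ∧ ∀ z : Fin n → ℂ,
      ∑ j, (lam j : ℂ) *
        (z j * (∑ l, eval z (pderiv j (P l)) * (starRingEnd ℂ) (eval z (P l)))
          + (starRingEnd ℂ) (z j) *
            (∑ l, eval z (P l) * (starRingEnd ℂ) (eval z (pderiv j (P l))))) = 0) ∧
    -- (ii) no nonzero nilpotent rotation
    (¬ ∃ N : Matrix (Fin n) (Fin n) ℂ, IsNilpotent N ∧ N ≠ 0 ∧ ∀ z : Fin n → ℂ,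
      ∑ j, (N.mulVec z j * (∑ l, eval z (pderiv j (P l)) * (starRingEnd ℂ) (eval z (P l)))
        + (starRingEnd ℂ)
            (N.mulVec z j *
              (∑ l, eval z (pderiv j (P l)) * (starRingEnd ℂ) (eval z (P l))))) = 0) := by
  classical
  constructor
  · -- (i) no real diagonal rotation
    rintro ⟨lam, hlam, hrot⟩
    set g : Fin k → MvPolynomial (Fin n) ℂ :=
      fun l => ∑ j, C ((lam j : ℂ)) * (X j * pderiv j (P l)) with hg
    have hevalg : ∀ (z : Fin n → ℂ) (l : Fin k), eval z (g l)
        = ∑ j, ((lam j : ℂ) * z j) * eval z (pderiv j (P l)) := by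
      intro z l
      simp only [hg, map_sum]
      refine Finset.sum_congr rfl fun j _ => ?_
      rw [map_mul, map_mul, eval_C, eval_X]
      ring
    have hclaim1 : ∀ z : Fin n → ℂ,
        ∑ l, eval z (g l) * (starRingEnd ℂ) (eval z (P l))
          = ∑ j, (lam j : ℂ) * (z j *
              (∑ l, eval z (pderiv j (P l)) * (starRingEnd ℂ) (eval z (P l)))) := by
      intro z
      have e1 : ∀ l : Fin k, eval z (g l) * (starRingEnd ℂ) (eval z (P l))
          = ∑ j, ((lam j : ℂ) * z j) * eval z (pderiv j (P l))
              * (starRingEnd ℂ) (eval z (P l)) := by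
        intro l
        rw [hevalg z l, Finset.sum_mul]
      rw [Finset.sum_congr rfl fun l (_ : l ∈ Finset.univ) => e1 l]
      rw [Finset.sum_comm]
      refine Finset.sum_congr rfl fun j _ => ?_
      rw [Finset.mul_sum, Finset.mul_sum]
      refine Finset.sum_congr rfl fun l _ => ?_
      ring
    have hclaim2 : ∀ z : Fin n → ℂ,
        ∑ l, eval z (P l) * (starRingEnd ℂ) (eval z (g l))
          = ∑ j, (lam j : ℂ) * ((starRingEnd ℂ) (z j) *
              (∑ l, eval z (P l) * (starRingEnd ℂ) (eval z (pderiv j (P l))))) := by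
      intro z
      have hconjg : ∀ l : Fin k, eval z (P l) * (starRingEnd ℂ) (eval z (g l))
          = ∑ j, ((lam j : ℂ) * (starRingEnd ℂ) (z j))
              * (starRingEnd ℂ) (eval z (pderiv j (P l))) * eval z (P l) := by
        intro l
        rw [hevalg z l, map_sum, Finset.mul_sum]
        refine Finset.sum_congr rfl fun j _ => ?_
        rw [map_mul, map_mul, Complex.conj_ofReal]
        ring
      rw [Finset.sum_congr rfl fun l (_ : l ∈ Finset.univ) => hconjg l]
      rw [Finset.sum_comm]
      refine Finset.sum_congr rfl fun j _ => ?_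
      rw [Finset.mul_sum, Finset.mul_sum]
      refine Finset.sum_congr rfl fun l _ => ?_
      ring
    have h0 : ∀ z : Fin n → ℂ, ∑ i : Fin k ⊕ Fin k,
        eval z (Sum.elim g P i) * (starRingEnd ℂ) (eval z (Sum.elim P g i)) = 0 := by
      intro z
      rw [Fintype.sum_sum_type]
      simp only [Sum.elim_inl, Sum.elim_inr]
      rw [hclaim1 z, hclaim2 z]
      refine Eq.trans ?_ (hrot z)
      rw [← Finset.sum_add_distrib]
      refine Finset.sum_congr rfl fun j _ => ?_
      ring
    have pol := polarize (Sum.elim g P) (Sum.elim P g) h0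
    have step1 : ∀ (w : Fin n → ℂ) (α : Fin n →₀ ℕ),
        ∑ i : Fin k ⊕ Fin k, (starRingEnd ℂ) (eval w (Sum.elim P g i))
          * coeff α (Sum.elim g P i) = 0 := by
      intro w α
      have hp : (∑ i : Fin k ⊕ Fin k,
          (starRingEnd ℂ) (eval w (Sum.elim P g i)) • Sum.elim g P i) = 0 := by
        apply MvPolynomial.funext
        intro z
        rw [map_sum]
        rw [Finset.sum_congr rfl fun i (_ : i ∈ Finset.univ) =>
          MvPolynomial.smul_eval z (Sum.elim g P i) ((starRingEnd ℂ) (eval w (Sum.elim P g i)))]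
        rw [Finset.sum_congr rfl fun i (_ : i ∈ Finset.univ) =>
          mul_comm ((starRingEnd ℂ) (eval w (Sum.elim P g i))) (eval z (Sum.elim g P i))]
        rw [pol z w]
        simp
      have h2 := congrArg (coeff α) hp
      rw [MvPolynomial.coeff_sum] at h2
      simp only [coeff_smul, smul_eq_mul, coeff_zero] at h2
      exact h2
    have step2 : ∀ α : Fin n →₀ ℕ,
        ∑ i : Fin k ⊕ Fin k, (starRingEnd ℂ) (coeff α (Sum.elim g P i))
          * coeff α (Sum.elim P g i) = 0 := by
      intro α
      have hq : (∑ i : Fin k ⊕ Fin k,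
          (starRingEnd ℂ) (coeff α (Sum.elim g P i)) • Sum.elim P g i) = 0 := by
        apply MvPolynomial.funext
        intro w
        rw [map_sum]
        rw [Finset.sum_congr rfl fun i (_ : i ∈ Finset.univ) =>
          MvPolynomial.smul_eval w (Sum.elim P g i) ((starRingEnd ℂ) (coeff α (Sum.elim g P i)))]
        have h3 := congrArg (starRingEnd ℂ) (step1 w α)
        simp only [map_sum, map_mul, Complex.conj_conj, map_zero] at h3
        rw [Finset.sum_congr rfl fun i (_ : i ∈ Finset.univ) =>
          mul_comm ((starRingEnd ℂ) (coeff α (Sum.elim g P i))) (eval w (Sum.elim P g i))]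
        rw [h3]
        simp
      have h4 := congrArg (coeff α) hq
      rw [MvPolynomial.coeff_sum] at h4
      simp only [coeff_smul, smul_eq_mul, coeff_zero] at h4
      exact h4
    have hcoeffg : ∀ (α : Fin n →₀ ℕ) (l : Fin k),
        coeff α (g l) = (∑ j, (lam j : ℂ) * (α j : ℂ)) * coeff α (P l) := by
      intro α l
      simp only [hg]
      rw [MvPolynomial.coeff_sum]
      rw [Finset.sum_congr rfl fun j (_ : j ∈ Finset.univ) => coeff_C_mul α ((lam j : ℂ)) _]
      rw [Finset.sum_congr rfl fun j (_ : j ∈ Finset.univ) =>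
        congrArg (fun t => ((lam j : ℂ)) * t) (coeff_X_mul_pderiv j α (P l))]
      rw [Finset.sum_mul]
      exact Finset.sum_congr rfl fun j _ => by ring
    have hgl0 : ∀ l, g l = 0 := by
      intro l
      rw [MvPolynomial.eq_zero_iff]
      intro α
      set cα : ℂ := ∑ j, (lam j : ℂ) * (α j : ℂ) with hcα
      have hconj_cα : (starRingEnd ℂ) cα = cα := by
        rw [hcα, map_sum]
        refine Finset.sum_congr rfl fun j _ => ?_
        rw [map_mul, Complex.conj_ofReal]
        norm_num
      have hstar := step2 α
      rw [Fintype.sum_sum_type] at hstar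
      simp only [Sum.elim_inl, Sum.elim_inr] at hstar
      have e1 : ∑ l', (starRingEnd ℂ) (coeff α (g l')) * coeff α (P l')
          = cα * ∑ l', (starRingEnd ℂ) (coeff α (P l')) * coeff α (P l') := by
        rw [Finset.mul_sum]
        refine Finset.sum_congr rfl fun l' _ => ?_
        rw [hcoeffg α l', map_mul, hconj_cα]
        ring
      have e2 : ∑ l', (starRingEnd ℂ) (coeff α (P l')) * coeff α (g l')
          = cα * ∑ l', (starRingEnd ℂ) (coeff α (P l')) * coeff α (P l') := by
        rw [Finset.mul_sum]
        refine Finset.sum_congr rfl fun l' _ => ?_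
        rw [hcoeffg α l']
        ring
      rw [e1, e2] at hstar
      have hcw : cα * ∑ l', (starRingEnd ℂ) (coeff α (P l')) * coeff α (P l') = 0 := by
        have h2 : (2 : ℂ) * (cα * ∑ l', (starRingEnd ℂ) (coeff α (P l')) * coeff α (P l')) = 0 := by
          linear_combination hstar
        rcases mul_eq_zero.mp h2 with h | h
        · exact absurd h two_ne_zero
        · exact h
      rw [hcoeffg α l]
      by_cases hc0 : cα = 0
      · rw [← hcα, hc0, zero_mul]
      · have hW : ∑ l', (starRingEnd ℂ) (coeff α (P l')) * coeff α (P l') = 0 := by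
          rcases mul_eq_zero.mp hcw with h | h
          · exact absurd h hc0
          · exact h
        have hW' : ∑ l', Complex.normSq (coeff α (P l')) = 0 := by
          have e3 : ∀ l' : Fin k, (starRingEnd ℂ) (coeff α (P l')) * coeff α (P l')
              = ((Complex.normSq (coeff α (P l')) : ℝ) : ℂ) := fun l' => by
            rw [mul_comm, Complex.mul_conj]
          rw [Finset.sum_congr rfl fun l' (_ : l' ∈ Finset.univ) => e3 l'] at hW
          rw [← Complex.ofReal_sum] at hW
          exact_mod_cast hW
        have h5 := (Finset.sum_eq_zero_iff_of_nonneg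
          (fun l' _ => Complex.normSq_nonneg (coeff α (P l')))).mp hW' l (Finset.mem_univ l)
        rw [Complex.normSq_eq_zero.mp h5, mul_zero]
    have hfinal : ∀ z : Fin n → ℂ, ∑ j, eval z ((fun j => C ((lam j : ℂ)) * X j) j) *
        (∑ l, eval z (pderiv j (P l)) * (starRingEnd ℂ) (eval z (P l))) = 0 := by
      intro z
      have e : ∀ j : Fin n, eval z (C ((lam j : ℂ)) * X j) *
          (∑ l, eval z (pderiv j (P l)) * (starRingEnd ℂ) (eval z (P l)))
          = (lam j : ℂ) * (z j * (∑ l, eval z (pderiv j (P l)) * (starRingEnd ℂ) (eval z (P l)))) := by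
        intro j
        rw [map_mul, eval_C, eval_X]
        ring
      rw [Finset.sum_congr rfl fun j (_ : j ∈ Finset.univ) => e j]
      rw [← hclaim1 z]
      have e2 : ∀ l : Fin k, eval z (g l) * (starRingEnd ℂ) (eval z (P l)) = 0 := by
        intro l
        rw [hgl0 l]
        simp
      rw [Finset.sum_congr rfl fun l (_ : l ∈ Finset.univ) => e2 l]
      simp
    have hf := hnd (fun j => C ((lam j : ℂ)) * X j) hfinal
    apply hlam
    funext j
    have h1 : C ((lam j : ℂ)) * X j = (0 : MvPolynomial (Fin n) ℂ) := congrFun hf j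
    have h2 := congrArg (eval (fun i : Fin n => if i = j then (1 : ℂ) else 0)) h1
    rw [map_mul, eval_C, eval_X, map_zero] at h2
    simp at h2
    show lam j = 0
    exact_mod_cast h2
  · -- (ii) no nilpotent rotation
    rintro ⟨N, hNnil, hNne, hrot⟩
    have hmv : ∀ (z : Fin n → ℂ) (j : Fin n), N.mulVec z j = ∑ i, N j i * z i := by
      intro z j
      simp [Matrix.mulVec, dotProduct]
    have hclaimS : ∀ z : Fin n → ℂ,
        ∑ l, eval z (Alin N (P l)) * (starRingEnd ℂ) (eval z (P l))
          = ∑ j, N.mulVec z j *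
              (∑ l, eval z (pderiv j (P l)) * (starRingEnd ℂ) (eval z (P l))) := by
      intro z
      have e1 : ∀ l : Fin k, eval z (Alin N (P l)) * (starRingEnd ℂ) (eval z (P l))
          = ∑ j, (∑ i, N j i * z i) * eval z (pderiv j (P l))
              * (starRingEnd ℂ) (eval z (P l)) := by
        intro l
        rw [eval_Alin, Finset.sum_mul]
      rw [Finset.sum_congr rfl fun l (_ : l ∈ Finset.univ) => e1 l]
      rw [Finset.sum_comm]
      refine Finset.sum_congr rfl fun j _ => ?_
      rw [Finset.mul_sum]
      refine Finset.sum_congr rfl fun l _ => ?_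
      rw [hmv z j]
      ring
    have h0 : ∀ z : Fin n → ℂ, ∑ i : Fin k ⊕ Fin k,
        eval z (Sum.elim (fun l => Alin N (P l)) P i) *
          (starRingEnd ℂ) (eval z (Sum.elim P (fun l => Alin N (P l)) i)) = 0 := by
      intro z
      rw [Fintype.sum_sum_type]
      simp only [Sum.elim_inl, Sum.elim_inr]
      have h1 := hrot z
      rw [Finset.sum_add_distrib, ← map_sum] at h1
      have h2 : ∑ l, eval z (P l) * (starRingEnd ℂ) (eval z (Alin N (P l)))
          = (starRingEnd ℂ) (∑ l, eval z (Alin N (P l)) * (starRingEnd ℂ) (eval z (P l))) := by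
        rw [map_sum]
        refine Finset.sum_congr rfl fun l _ => ?_
        rw [map_mul, Complex.conj_conj]
        ring
      rw [h2, hclaimS z]
      exact h1
    have pol := polarize (Sum.elim (fun l => Alin N (P l)) P)
      (Sum.elim P (fun l => Alin N (P l))) h0
    have hg0 := main_nilpotent N hNnil P pol
    have hfinal : ∀ z : Fin n → ℂ, ∑ j, eval z ((fun j => ∑ i, C (N j i) * X i) j) *
        (∑ l, eval z (pderiv j (P l)) * (starRingEnd ℂ) (eval z (P l))) = 0 := by
      intro z
      have he : ∀ j : Fin n, eval z (∑ i, C (N j i) * X i) *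
          (∑ l, eval z (pderiv j (P l)) * (starRingEnd ℂ) (eval z (P l)))
          = N.mulVec z j * (∑ l, eval z (pderiv j (P l)) * (starRingEnd ℂ) (eval z (P l))) := by
        intro j
        congr 1
        rw [map_sum, hmv z j]
        exact Finset.sum_congr rfl fun i _ => by rw [map_mul, eval_C, eval_X]
      rw [Finset.sum_congr rfl fun j (_ : j ∈ Finset.univ) => he j]
      rw [← hclaimS z]
      have e2 : ∀ l : Fin k, eval z (Alin N (P l)) * (starRingEnd ℂ) (eval z (P l)) = 0 := by
        intro l
        rw [hg0 l]
        simp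
      rw [Finset.sum_congr rfl fun l (_ : l ∈ Finset.univ) => e2 l]
      simp
    have hf := hnd (fun j => ∑ i, C (N j i) * X i) hfinal
    apply hNne
    ext j i
    have h1 : (∑ i', C (N j i') * X i' : MvPolynomial (Fin n) ℂ) = 0 := congrFun hf j
    have h2 := congrArg (eval (fun i' : Fin n => if i' = i then (1 : ℂ) else 0)) h1
    rw [map_sum, map_zero] at h2
    rw [Finset.sum_congr rfl fun i' (_ : i' ∈ Finset.univ) => by
      rw [map_mul, eval_C, eval_X]] at h2
    simp only [mul_ite, mul_one, mul_zero, Finset.sum_ite_eq', Finset.mem_univ,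
      if_true] at h2
    show N j i = 0
    exact h2
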